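/- Let p be a prime with p ≠ 2 and p ≠ 3. Then the equation w² = −p + 72pz⁴ has solutions z, w in each of the fields ℝ, ℚ₂, ℚ₃ and ℚ_p if and only if p ≡ 23 (mod 24). -/

import Mathlib

open Polynomial

set_option maxHeartbeats 1000000


private lemma toZMod_zero_iff' {p : ℕ} [Fact p.Prime] (x : ℤ_[p]) :
    PadicInt.toZMod x = 0 ↔ ‖x‖ < 1 := by
  rw [← RingHom.mem_ker, PadicInt.ker_toZMod, PadicInt.maximalIdeal_eq_span_p,
    Ideal.mem_span_singleton, PadicInt.norm_lt_one_iff_dvd]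

private lemma zmod3_caseA : ∀ b q : ZMod 3, q ≠ 0 → b ^ 2 = -q → q = 2 := by decide

private lemma zmod3_caseB : ∀ b q a : ZMod 3, q ≠ 0 → a ≠ 0 → b ^ 2 = 8 * q * a ^ 4 → q = 2 := by
  decide

private lemma zmod3_val (p : ℕ) (h : ((p : ℕ) : ZMod 3) = 2) : p % 3 = 2 := by
  have h1 : ((p % 3 : ℕ) : ZMod 3) = 2 := by rwa [ZMod.natCast_mod]
  have h3 : p % 3 < 3 := Nat.mod_lt _ (by norm_num)
  set r := p % 3 with hr
  interval_cases r <;> first | rfl | (exfalso; revert h1; decide)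

private lemma q3_forward (p : ℕ) [Fact p.Prime] (hp3 : p ≠ 3)
    (h : ∃ z w : ℚ_[3], w ^ 2 = -(p : ℚ_[3]) + 72 * (p : ℚ_[3]) * z ^ 4) : p % 3 = 2 := by
  obtain ⟨z, w, h⟩ := h
  have hpz : ((p : ℕ) : ZMod 3) ≠ 0 := by
    rw [Ne, ZMod.natCast_eq_zero_iff]
    intro hd
    exact hp3 ((Nat.prime_dvd_prime_iff_eq Nat.prime_three Fact.out).mp hd).symm
  by_cases hz : ‖z‖ ≤ 1
  · -- integral case
    have hb : ‖-(p:ℚ_[3]) + 72 * (p:ℚ_[3]) * z ^ 4‖ ≤ 1 := by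
      refine le_trans (Padic.nonarchimedean _ _) (max_le ?_ ?_)
      · rw [norm_neg, show ((p:ℚ_[3])) = (((p:ℤ)):ℚ_[3]) by push_cast; ring]
        exact Padic.norm_int_le_one _
      · rw [show (72 * (p:ℚ_[3]) * z ^ 4) = (((72 * p : ℤ)):ℚ_[3]) * z ^ 4 by push_cast; ring,
          norm_mul, norm_pow]
        exact mul_le_one₀ (Padic.norm_int_le_one _) (by positivity)
          (pow_le_one₀ (norm_nonneg z) hz)
    have hw : ‖w‖ ≤ 1 := by
      have h1 : ‖w‖ ^ 2 ≤ 1 := by rw [← norm_pow, h]; exact hb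
      nlinarith [norm_nonneg w]
    set W : ℤ_[3] := ⟨w, hw⟩ with hWdef
    set Z : ℤ_[3] := ⟨z, hz⟩ with hZdef
    have hInt : W ^ 2 = -((p:ℕ) : ℤ_[3]) + ((72:ℕ) : ℤ_[3]) * ((p:ℕ) : ℤ_[3]) * Z ^ 4 := by
      apply Subtype.ext
      push_cast [hWdef, hZdef]
      exact h
    have hmod := congrArg (PadicInt.toZMod (p := 3)) hInt
    simp only [map_pow, map_add, map_neg, map_mul, map_natCast] at hmod
    rw [show ((72:ℕ) : ZMod 3) = 0 by decide] at hmod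
    simp only [zero_mul, mul_zero, add_zero] at hmod
    exact zmod3_val p (zmod3_caseA _ _ hpz hmod)
  · -- non-integral case
    push_neg at hz
    have hz0 : z ≠ 0 := by rintro rfl; simp at hz; linarith
    have hval : z.valuation ≤ -1 := by
      by_contra hv
      push_neg at hv
      exact absurd ((Padic.norm_le_one_iff_val_nonneg z).mpr (by omega)) (not_le.mpr hz)
    obtain ⟨K, hK⟩ : ∃ K : ℕ, z.valuation = -(K + 1) := ⟨(-z.valuation - 1).toNat, by omega⟩
    set Z : ℚ_[3] := ((3:ℕ):ℚ_[3]) ^ (K + 1) * z with hZ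
    set W : ℚ_[3] := ((3:ℕ):ℚ_[3]) ^ (2 * K + 1) * w with hW
    have hkey : W ^ 2 = ((8 * p : ℕ) : ℚ_[3]) * Z ^ 4 - ((3:ℕ):ℚ_[3]) ^ (4 * K + 2) * ((p:ℕ):ℚ_[3]) := by
      rw [hW, hZ]
      push_cast
      linear_combination (3:ℚ_[3]) ^ (4 * K + 2) * h
    have h3norm : ‖((3:ℕ):ℚ_[3])‖ = (3:ℝ)⁻¹ := by
      have := @Padic.norm_p 3 _
      exact_mod_cast this
    have hznorm : ‖z‖ = (3:ℝ) ^ (K + 1) := by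
      rw [Padic.norm_eq_zpow_neg_valuation hz0, hK, neg_neg,
        show ((K:ℤ) + 1) = ((K + 1 : ℕ) : ℤ) by push_cast; ring, zpow_natCast]
      norm_num
    have hZnorm : ‖Z‖ = 1 := by
      rw [hZ, norm_mul, norm_pow, h3norm, hznorm, inv_pow]
      exact inv_mul_cancel₀ (by positivity)
    have hWle : ‖W‖ ≤ 1 := by
      have h1 : ‖W‖ ^ 2 ≤ 1 := by
        rw [← norm_pow, hkey, sub_eq_add_neg]
        refine le_trans (Padic.nonarchimedean _ _) (max_le ?_ ?_)
        · rw [norm_mul, norm_pow, hZnorm,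
            show ((8 * p : ℕ) : ℚ_[3]) = (((8 * p : ℤ)):ℚ_[3]) by push_cast; ring]
          rw [one_pow, mul_one]
          exact Padic.norm_int_le_one (8 * p : ℤ)
        · rw [norm_neg, norm_mul, norm_pow, h3norm,
            show ((p : ℕ) : ℚ_[3]) = (((p : ℤ)):ℚ_[3]) by push_cast; ring]
          refine mul_le_one₀ ?_ (by positivity) (Padic.norm_int_le_one _)
          exact pow_le_one₀ (by norm_num) (by norm_num)
      nlinarith [norm_nonneg W]
    set W' : ℤ_[3] := ⟨W, hWle⟩ with hW'def
    set Z' : ℤ_[3] := ⟨Z, le_of_eq hZnorm⟩ with hZ'def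
    have hInt : W' ^ 2 = ((8 * p : ℕ) : ℤ_[3]) * Z' ^ 4 - ((3:ℕ) : ℤ_[3]) ^ (4 * K + 2) * ((p:ℕ) : ℤ_[3]) := by
      apply Subtype.ext
      push_cast [hW'def, hZ'def]
      exact_mod_cast hkey
    have hZ'ne : PadicInt.toZMod Z' ≠ 0 := by
      rw [Ne, toZMod_zero_iff']
      rw [show ‖Z'‖ = ‖Z‖ from rfl, hZnorm]
      norm_num
    have hmod := congrArg (PadicInt.toZMod (p := 3)) hInt
    simp only [map_pow, map_sub, map_mul, map_natCast] at hmod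
    rw [show ((3:ℕ) : ZMod 3) = 0 by decide, zero_pow (by omega), zero_mul, sub_zero] at hmod
    push_cast at hmod
    exact zmod3_val p (zmod3_caseB _ _ _ hpz hZ'ne hmod)


private lemma aux8 (p : ℕ) (hodd : p % 2 = 1) (a : ZMod (2 ^ 3))
    (h : a ^ 2 = -((p : ℕ) : ZMod (2 ^ 3))) : p % 8 = 7 := by
  have h1 : ((p % 8 : ℕ) : ZMod (2 ^ 3)) = ((p : ℕ) : ZMod (2 ^ 3)) := ZMod.natCast_mod p 8
  rw [← h1] at h
  have h8 : p % 8 < 8 := Nat.mod_lt _ (by norm_num)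
  have hro : p % 8 % 2 = 1 := by omega
  set r := p % 8 with hr
  clear_value r
  interval_cases r <;> first | rfl | omega | (exfalso; revert a; intro a h; revert h; revert a; decide)

private lemma q2_forward (p : ℕ) [Fact p.Prime] (hp2 : p ≠ 2)
    (h : ∃ z w : ℚ_[2], w ^ 2 = -(p : ℚ_[2]) + 72 * (p : ℚ_[2]) * z ^ 4) : p % 8 = 7 := by
  obtain ⟨z, w, h⟩ := h
  have hpodd : p % 2 = 1 := by
    rcases (Fact.out : p.Prime).eq_two_or_odd' with h2 | ho
    · exact absurd h2 hp2
    · exact Nat.odd_iff.mp ho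
  have hpdvd : ¬ ((2:ℤ) ∣ (p:ℤ)) := by omega
  by_cases hz : ‖z‖ ≤ 1
  · -- integral case
    have hb : ‖-(p:ℚ_[2]) + 72 * (p:ℚ_[2]) * z ^ 4‖ ≤ 1 := by
      refine le_trans (Padic.nonarchimedean _ _) (max_le ?_ ?_)
      · rw [norm_neg, show ((p:ℚ_[2])) = (((p:ℤ)):ℚ_[2]) by push_cast; ring]
        exact Padic.norm_int_le_one _
      · rw [show (72 * (p:ℚ_[2]) * z ^ 4) = (((72 * p : ℤ)):ℚ_[2]) * z ^ 4 by push_cast; ring,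
          norm_mul, norm_pow]
        exact mul_le_one₀ (Padic.norm_int_le_one _) (by positivity)
          (pow_le_one₀ (norm_nonneg z) hz)
    have hw : ‖w‖ ≤ 1 := by
      have h1 : ‖w‖ ^ 2 ≤ 1 := by rw [← norm_pow, h]; exact hb
      nlinarith [norm_nonneg w]
    set W : ℤ_[2] := ⟨w, hw⟩ with hWdef
    set Z : ℤ_[2] := ⟨z, hz⟩ with hZdef
    have hInt : W ^ 2 = -((p:ℕ) : ℤ_[2]) + ((72:ℕ) : ℤ_[2]) * ((p:ℕ) : ℤ_[2]) * Z ^ 4 := by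
      apply Subtype.ext
      push_cast [hWdef, hZdef]
      exact h
    have hmod := congrArg (PadicInt.toZModPow (p := 2) 3) hInt
    simp only [map_pow, map_add, map_neg, map_mul, map_natCast] at hmod
    rw [show ((72:ℕ) : ZMod (2 ^ 3)) = 0 by decide] at hmod
    simp only [zero_mul, mul_zero, add_zero] at hmod
    exact aux8 p hpodd _ hmod
  · -- non-integral case
    push_neg at hz
    have hz0 : z ≠ 0 := by rintro rfl; simp at hz; linarith
    have hval : z.valuation ≤ -1 := by
      by_contra hv
      push_neg at hv
      exact absurd ((Padic.norm_le_one_iff_val_nonneg z).mpr (by omega)) (not_le.mpr hz)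
    obtain ⟨K, hK⟩ : ∃ K : ℕ, z.valuation = -(K + 1) := ⟨(-z.valuation - 1).toNat, by omega⟩
    have h2norm : ‖((2:ℕ):ℚ_[2])‖ = (2:ℝ)⁻¹ := by
      have := @Padic.norm_p 2 _
      exact_mod_cast this
    have h9pnorm : ‖((9 * p : ℤ):ℚ_[2])‖ = 1 := by
      refine le_antisymm (Padic.norm_int_le_one _) (not_lt.mp ?_)
      rw [Padic.norm_intCast_lt_one_iff]
      omega
    have hznorm : ‖z‖ = (2:ℝ) ^ (K + 1) := by
      rw [Padic.norm_eq_zpow_neg_valuation hz0, hK, neg_neg,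
        show ((K:ℤ) + 1) = ((K + 1 : ℕ) : ℤ) by push_cast; ring, zpow_natCast]
      norm_num
    have e1 : ‖72 * (p:ℚ_[2]) * z ^ 4‖ = (2:ℝ) ^ (4 * K + 1) := by
      rw [show (72 * (p:ℚ_[2])) = ((2:ℕ):ℚ_[2]) ^ 3 * ((9 * p : ℤ):ℚ_[2]) by push_cast; ring,
        norm_mul, norm_mul, norm_pow, norm_pow, h2norm, h9pnorm, hznorm, mul_one]
      rw [inv_pow, ← pow_mul, inv_mul_eq_iff_eq_mul₀ (by positivity), ← pow_add]
      congr 1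
      ring
    have e2 : ‖w‖ ^ 2 = (2:ℝ) ^ (4 * K + 1) := by
      rw [← norm_pow, h, Padic.add_eq_max_of_ne, e1]
      · rw [max_eq_right]
        rw [norm_neg, show ((p:ℚ_[2])) = (((p:ℤ)):ℚ_[2]) by push_cast; ring]
        calc ‖((p:ℤ):ℚ_[2])‖ ≤ 1 := Padic.norm_int_le_one _
          _ ≤ (2:ℝ) ^ (4 * K + 1) := one_le_pow₀ (by norm_num)
      · rw [e1, norm_neg, show ((p:ℚ_[2])) = (((p:ℤ)):ℚ_[2]) by push_cast; ring]
        intro hEq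
        have : (1:ℝ) < (2:ℝ) ^ (4 * K + 1) := one_lt_pow₀ (by norm_num) (by omega)
        have hle := Padic.norm_int_le_one (p : ℤ) (p := 2)
        rw [hEq] at hle
        linarith
    have hw0 : w ≠ 0 := by
      rintro rfl
      rw [norm_zero] at e2
      have : (0:ℝ) < (2:ℝ) ^ (4 * K + 1) := by positivity
      nlinarith
    have e3 : (2:ℝ) ^ (2 * w.valuation) = (2:ℝ) ^ (-((4 * K + 1 : ℕ) : ℤ)) := by
      rw [zpow_neg, zpow_natCast, ← e2, Padic.norm_eq_zpow_neg_valuation hw0]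
      rw [show ((2:ℕ):ℝ) = (2:ℝ) by norm_num, ← zpow_natCast ((2:ℝ) ^ (-w.valuation)) 2, ← zpow_mul]
      rw [← zpow_neg]
      congr 1
      ring
    have := zpow_right_injective₀ (by norm_num : (0:ℝ) < 2) (by norm_num : (2:ℝ) ≠ 1) e3
    omega

private lemma q2_sqrt (p : ℕ) (hp : p % 8 = 7) : ∃ w : ℚ_[2], w ^ 2 = -(p : ℚ_[2]) := by
  have h8 : ((2:ℤ))^3 ∣ (1 + (p:ℤ)) := by omega
  set F : Polynomial ℤ_[2] := X ^ 2 + C (p : ℤ_[2]) with hF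
  have heval : F.eval 1 = ((1 + (p:ℤ) : ℤ) : ℤ_[2]) := by push_cast; simp [hF]
  have hderiv : F.derivative.eval 1 = (2 : ℤ_[2]) := by simp [hF]; norm_num
  have hnorm : ‖F.eval 1‖ < ‖F.derivative.eval 1‖ ^ 2 := by
    rw [heval, hderiv]
    have h1 : ‖((1 + (p:ℤ) : ℤ) : ℤ_[2])‖ ≤ (2:ℝ)^(-(3:ℤ)) := by
      rw [show ((2:ℝ)) = ((2:ℕ):ℝ) by norm_num]
      exact PadicInt.norm_int_le_pow_iff_dvd.mpr (by exact_mod_cast h8)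
    have h2 : ‖(2 : ℤ_[2])‖ = 2⁻¹ := by
      have := @PadicInt.norm_p 2 _
      norm_num at this ⊢
      exact_mod_cast this
    rw [h2]
    calc ‖((1 + (p:ℤ) : ℤ) : ℤ_[2])‖ ≤ (2:ℝ)^(-(3:ℤ)) := h1
      _ < (2:ℝ)⁻¹ ^ 2 := by norm_num
  obtain ⟨t, ht, -⟩ := hensels_lemma hnorm
  refine ⟨(t : ℚ_[2]), ?_⟩
  have : t ^ 2 + (p : ℤ_[2]) = 0 := by simpa [hF] using ht
  have := congrArg (fun x : ℤ_[2] => (x : ℚ_[2])) this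
  push_cast at this
  linear_combination this


private lemma q3_sqrt (p : ℕ) (hp : p % 3 = 2) : ∃ w : ℚ_[3], w ^ 2 = -(p : ℚ_[3]) := by
  have h3 : ((3:ℤ))^1 ∣ (1 + (p:ℤ)) := by omega
  set F : Polynomial ℤ_[3] := X ^ 2 + C (p : ℤ_[3]) with hF
  have heval : F.eval 1 = ((1 + (p:ℤ) : ℤ) : ℤ_[3]) := by push_cast; simp [hF]
  have hderiv : F.derivative.eval 1 = (2 : ℤ_[3]) := by simp [hF]; norm_num
  have hnorm : ‖F.eval 1‖ < ‖F.derivative.eval 1‖ ^ 2 := by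
    rw [heval, hderiv]
    have h1 : ‖((1 + (p:ℤ) : ℤ) : ℤ_[3])‖ ≤ (3:ℝ)^(-(1:ℤ)) := by
      rw [show ((3:ℝ)) = ((3:ℕ):ℝ) by norm_num]
      exact PadicInt.norm_int_le_pow_iff_dvd.mpr (by exact_mod_cast h3)
    have h2 : ‖(2 : ℤ_[3])‖ = 1 := by
      refine le_antisymm (PadicInt.norm_le_one _) (not_lt.mp ?_)
      rw [show (2 : ℤ_[3]) = ((2:ℤ) : ℤ_[3]) by norm_num, PadicInt.norm_int_lt_one_iff_dvd]
      decide
    rw [h2]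
    calc ‖((1 + (p:ℤ) : ℤ) : ℤ_[3])‖ ≤ (3:ℝ)^(-(1:ℤ)) := h1
      _ < (1:ℝ) ^ 2 := by norm_num
  obtain ⟨t, ht, -⟩ := hensels_lemma hnorm
  refine ⟨(t : ℚ_[3]), ?_⟩
  have h0 : t ^ 2 + (p : ℤ_[3]) = 0 := by simpa [hF] using ht
  have := congrArg (fun x : ℤ_[3] => (x : ℚ_[3])) h0
  push_cast at this
  linear_combination this


private lemma toZMod_zero_iff {p : ℕ} [Fact p.Prime] (x : ℤ_[p]) :
    PadicInt.toZMod x = 0 ↔ ‖x‖ < 1 := by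
  rw [← RingHom.mem_ker, PadicInt.ker_toZMod, PadicInt.maximalIdeal_eq_span_p,
    Ideal.mem_span_singleton, PadicInt.norm_lt_one_iff_dvd]

private lemma natCast_zmod_ne_zero {p : ℕ} [hp : Fact p.Prime] (hp2 : p ≠ 2) (hp3 : p ≠ 3)
    {n : ℕ} (h : n = 72 ∨ n = 288) : ((n:ℕ) : ZMod p) ≠ 0 := by
  intro h0
  have hd : p ∣ n := (ZMod.natCast_eq_zero_iff n p).mp h0
  have hpp := hp.out
  rcases h with rfl | rfl
  · rcases (Nat.Prime.dvd_mul hpp).mp (show p ∣ 8 * 9 from hd) with h' | h'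
    · exact hp2 ((Nat.prime_dvd_prime_iff_eq hpp Nat.prime_two).mp
        (hpp.dvd_of_dvd_pow (show p ∣ 2^3 by norm_num [h'])))
    · exact hp3 ((Nat.prime_dvd_prime_iff_eq hpp Nat.prime_three).mp
        (hpp.dvd_of_dvd_pow (show p ∣ 3^2 by norm_num [h'])))
  · rcases (Nat.Prime.dvd_mul hpp).mp (show p ∣ 32 * 9 from hd) with h' | h'
    · exact hp2 ((Nat.prime_dvd_prime_iff_eq hpp Nat.prime_two).mp
        (hpp.dvd_of_dvd_pow (show p ∣ 2^5 by norm_num [h'])))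
    · exact hp3 ((Nat.prime_dvd_prime_iff_eq hpp Nat.prime_three).mp
        (hpp.dvd_of_dvd_pow (show p ∣ 3^2 by norm_num [h'])))

private lemma isSquare_or_neg {p : ℕ} [Fact p.Prime] (hns : ¬ IsSquare (-1 : ZMod p))
    {u : ZMod p} (hu : u ≠ 0) : IsSquare u ∨ IsSquare (-u) := by
  by_contra hc
  push_neg at hc
  obtain ⟨h1, h2⟩ := hc
  have c1 : quadraticChar (ZMod p) u = -1 := quadraticChar_neg_one_iff_not_isSquare.mpr h1
  have c2 : quadraticChar (ZMod p) (-u) = -1 := quadraticChar_neg_one_iff_not_isSquare.mpr h2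
  have c3 : quadraticChar (ZMod p) (-u) =
      quadraticChar (ZMod p) (-1) * quadraticChar (ZMod p) u := by
    rw [← map_mul]; ring_nf
  have c4 : quadraticChar (ZMod p) (-1) = 1 := by
    rw [c1, c2] at c3; linarith
  exact hns ((quadraticChar_one_iff_isSquare (neg_ne_zero.mpr one_ne_zero)).mp c4)

private lemma exists_72_pow4 (p : ℕ) [Fact p.Prime] (hp2 : p ≠ 2) (hp3 : p ≠ 3)
    (h8 : p % 8 = 7) : ∃ c : ZMod p, 72 * c ^ 4 = 1 := by
  have hsq2 : IsSquare (2 : ZMod p) := (ZMod.exists_sq_eq_two_iff hp2).mpr (Or.inr h8)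
  have hns : ¬ IsSquare (-1 : ZMod p) := by
    rw [ZMod.exists_sq_eq_neg_one_iff]
    omega
  obtain ⟨t, ht⟩ := hsq2
  have h72 : (72 : ZMod p) ≠ 0 := by
    have := natCast_zmod_ne_zero hp2 hp3 (n := 72) (Or.inl rfl)
    simpa using this
  have hs : (6 * t) * (6 * t) = 72 := by rw [show (72 : ZMod p) = 36 * 2 by norm_num, ht]; ring
  have hsne : (6 * t) ≠ 0 := by
    intro h0; rw [h0] at hs; simp at hs; exact h72 hs.symm
  have hinv : ((6*t)⁻¹ : ZMod p) ≠ 0 := inv_ne_zero hsne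
  have hs2 : (6 * t) ^ 2 = 72 := by rw [← hs]; ring
  rcases isSquare_or_neg hns hinv with ⟨d, hd⟩ | ⟨d, hd⟩ <;>
  · refine ⟨d, ?_⟩
    have hd4 : d ^ 4 = ((6*t)⁻¹)^2 := by rw [show d^4 = (d*d)^2 by ring, ← hd]; all_goals ring
    rw [hd4, ← hs2, ← mul_pow, mul_inv_cancel₀ hsne, one_pow]

private lemma qp_backward (p : ℕ) [Fact p.Prime] (hp2 : p ≠ 2) (hp3 : p ≠ 3) (h8 : p % 8 = 7) :
    ∃ z w : ℚ_[p], w ^ 2 = -(p : ℚ_[p]) + 72 * (p : ℚ_[p]) * z ^ 4 := by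
  obtain ⟨c, hc⟩ := exists_72_pow4 p hp2 hp3 h8
  have hcne : c ≠ 0 := by rintro rfl; simp at hc
  set a : ℤ_[p] := ((c.val : ℕ) : ℤ_[p]) with ha
  have hta : PadicInt.toZMod a = c := by
    rw [ha, map_natCast, ZMod.natCast_zmod_val]
  set F : Polynomial ℤ_[p] := C 72 * X ^ 4 - C (1 + (p:ℤ_[p])) with hF
  have heval : F.eval a = 72 * a ^ 4 - (1 + (p:ℤ_[p])) := by simp [hF]
  have hderiv : F.derivative.eval a = 288 * a ^ 3 := by
    simp [hF]; ring
  have hnorm : ‖F.eval a‖ < ‖F.derivative.eval a‖ ^ 2 := by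
    have h1 : ‖F.eval a‖ < 1 := by
      rw [← toZMod_zero_iff, heval]
      simp only [map_sub, map_mul, map_add, map_pow, map_ofNat, map_one, map_natCast, hta,
        ZMod.natCast_self]
      rw [hc]; ring
    have h2 : ‖F.derivative.eval a‖ = 1 := by
      refine le_antisymm (PadicInt.norm_le_one _) (not_lt.mp fun hlt => ?_)
      have h0 := (toZMod_zero_iff _).mpr hlt
      rw [hderiv] at h0
      simp only [map_mul, map_pow, map_ofNat, hta] at h0
      have h288 : ((288:ℕ) : ZMod p) ≠ 0 := natCast_zmod_ne_zero hp2 hp3 (Or.inr rfl)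
      simp only [Nat.cast_ofNat] at h288
      exact (mul_ne_zero h288 (pow_ne_zero _ hcne)) h0
    rw [h2]; norm_num; exact h1
  obtain ⟨t, ht, -⟩ := hensels_lemma hnorm
  have h0 : ((72:ℕ):ℤ_[p]) * t ^ 4 = 1 + (p:ℤ_[p]) := by
    rw [hF] at ht
    simp only [coe_aeval_eq_eval, eval_sub, eval_mul, eval_pow, eval_C, eval_X] at ht
    push_cast
    linear_combination ht
  have hq : ((72:ℕ):ℚ_[p]) * (t:ℚ_[p]) ^ 4 = 1 + (p:ℚ_[p]) := by
    exact_mod_cast congrArg (fun x : ℤ_[p] => (x : ℚ_[p])) h0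
  push_cast at hq
  exact ⟨(t:ℚ_[p]), (p:ℚ_[p]), by linear_combination -(p:ℚ_[p]) * hq⟩


theorem dual_Cnegp_locally_solvable_iff (p : ℕ) [Fact p.Prime] (hp2 : p ≠ 2) (hp3 : p ≠ 3) :
    ((∃ z w : ℝ, w ^ 2 = -(p : ℝ) + 72 * (p : ℝ) * z ^ 4) ∧
      (∃ z w : ℚ_[2], w ^ 2 = -(p : ℚ_[2]) + 72 * (p : ℚ_[2]) * z ^ 4) ∧
      (∃ z w : ℚ_[3], w ^ 2 = -(p : ℚ_[3]) + 72 * (p : ℚ_[3]) * z ^ 4) ∧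
      (∃ z w : ℚ_[p], w ^ 2 = -(p : ℚ_[p]) + 72 * (p : ℚ_[p]) * z ^ 4)) ↔
      p % 24 = 23 := by
  constructor
  · rintro ⟨-, h2, h3, -⟩
    have e2 := q2_forward p hp2 h2
    have e3 := q3_forward p hp3 h3
    omega
  · intro h24
    have hpodd : p % 2 = 1 := by
      rcases (Fact.out : p.Prime).eq_two_or_odd' with h2' | ho
      · exact absurd h2' hp2
      · exact Nat.odd_iff.mp ho
    have h8 : p % 8 = 7 := by omega
    have h3 : p % 3 = 2 := by omega
    refine ⟨⟨1, Real.sqrt (71 * p), ?_⟩, ?_, ?_, qp_backward p hp2 hp3 h8⟩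
    · rw [Real.sq_sqrt (by positivity)]
      push_cast
      ring
    · obtain ⟨w, hw⟩ := q2_sqrt p h8
      exact ⟨0, w, by rw [hw]; ring⟩
    · obtain ⟨w, hw⟩ := q3_sqrt p h3
      exact ⟨0, w, by rw [hw]; ring⟩
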